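/- For d ≥ 3, the 3d-2 product vectors in (ℂ^d)⊗(ℂ^d)⊗(ℂ^d) given by φ_i = (e_0 - e_i)⊗e_0⊗e_i, φ_{i+(d-1)} = e_i⊗(e_0-e_i)⊗e_0, φ_{i+2(d-1)} = e_0⊗e_i⊗(e_0-e_i) for i = 1,…,d-1, together with φ_{3d-2} = (∑_{j=0}^{d-1} e_j)⊗(∑_{j=0}^{d-1} e_j)⊗(∑_{j=0}^{d-1} e_j), are pairwise orthogonal. -/

import Mathlib

open scoped InnerProductSpace BigOperators

/-- The `i`-th standard basis vector of `ℂ^d`. -/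
noncomputable def e {d : ℕ} (i : Fin d) : EuclideanSpace ℂ (Fin d) :=
  EuclideanSpace.single i 1

/-- The all-ones vector `∑_{j=0}^{d-1} e_j` of `ℂ^d`. -/
noncomputable def ones (d : ℕ) : EuclideanSpace ℂ (Fin d) :=
  ∑ j : Fin d, e j

/-- The product (tensor) vector `a ⊗ b ⊗ c`, realized in
`ℂ^{d₁·d₂·d₃} = EuclideanSpace ℂ (Fin d₁ × Fin d₂ × Fin d₃)`; its inner product is the
product of the factor inner products. -/
noncomputable def prod3 {d₁ d₂ d₃ : ℕ} (a : EuclideanSpace ℂ (Fin d₁))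
    (b : EuclideanSpace ℂ (Fin d₂)) (c : EuclideanSpace ℂ (Fin d₃)) :
    EuclideanSpace ℂ (Fin d₁ × Fin d₂ × Fin d₃) :=
  (WithLp.equiv 2 _).symm fun p => a p.1 * b p.2.1 * c p.2.2

lemma inner_prod3 {d₁ d₂ d₃ : ℕ} (a a' : EuclideanSpace ℂ (Fin d₁))
    (b b' : EuclideanSpace ℂ (Fin d₂)) (c c' : EuclideanSpace ℂ (Fin d₃)) :
    ⟪prod3 a b c, prod3 a' b' c'⟫_ℂ = ⟪a, a'⟫_ℂ * ⟪b, b'⟫_ℂ * ⟪c, c'⟫_ℂ := by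
  simp only [prod3, PiLp.inner_apply, RCLike.inner_apply, WithLp.equiv_symm_apply, WithLp.ofLp_toLp, map_mul,
    Fintype.sum_prod_type, Finset.sum_mul, Finset.mul_sum]
  conv_rhs => rw [Finset.sum_comm]
  conv_lhs => rw [Finset.sum_comm]
  refine Finset.sum_congr rfl fun y _ => ?_
  rw [Finset.sum_comm]
  exact Finset.sum_congr rfl fun j _ => Finset.sum_congr rfl fun k _ => by ring

lemma inner_e {d : ℕ} (i j : Fin d) : ⟪e i, e j⟫_ℂ = if i = j then 1 else 0 := by
  simp [e, EuclideanSpace.inner_single_left, EuclideanSpace.single_apply, eq_comm]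

lemma inner_e_ones {d : ℕ} (i : Fin d) : ⟪e i, ones d⟫_ℂ = 1 := by
  rw [ones, inner_sum]; simp only [inner_e]; simp

lemma inner_ones_e {d : ℕ} (i : Fin d) : ⟪ones d, e i⟫_ℂ = 1 := by
  rw [ones, sum_inner]; simp only [inner_e]; simp

/-- for `d = m + 3 ≥ 3`, the `3d-2` product vectors of Lemma 1
are pairwise orthogonal. -/
theorem stmt_0 (m : ℕ) :
    ({v | (∃ i : Fin (m + 3), i ≠ 0 ∧ v = prod3 (e 0 - e i) (e 0) (e i)) ∨
          (∃ i : Fin (m + 3), i ≠ 0 ∧ v = prod3 (e i) (e 0 - e i) (e 0)) ∨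
          (∃ i : Fin (m + 3), i ≠ 0 ∧ v = prod3 (e 0) (e i) (e 0 - e i)) ∨
          v = prod3 (ones (m + 3)) (ones (m + 3)) (ones (m + 3))} :
        Set (EuclideanSpace ℂ (Fin (m + 3) × Fin (m + 3) × Fin (m + 3)))).Pairwise
      (fun u v => ⟪u, v⟫_ℂ = 0) := by
  intro u hu v hv hne
  rcases hu with ⟨i, hi, rfl⟩ | ⟨i, hi, rfl⟩ | ⟨i, hi, rfl⟩ | rfl <;>
    rcases hv with ⟨j, hj, rfl⟩ | ⟨j, hj, rfl⟩ | ⟨j, hj, rfl⟩ | rfl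
  all_goals try exact absurd rfl hne
  all_goals try (rcases eq_or_ne i j with rfl | hij; · exact absurd rfl hne)
  all_goals rw [inner_prod3]
  all_goals simp only [inner_sub_left, inner_sub_right, inner_e, inner_e_ones, inner_ones_e]
  all_goals first
    | simp [hi, hj, hij, Ne.symm hi, Ne.symm hj, Ne.symm hij]
    | simp [hi, hj, Ne.symm hi, Ne.symm hj]
    | simp [hi, Ne.symm hi]
    | simp [hj, Ne.symm hj]
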